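/- Let Ψ_h be a finite-dimensional space of piecewise polynomial functions on a conforming quasi-uniform triangulation 𝒢_h of a surface Γ, with zero mean over Γ. Suppose every φ ∈ Ψ_h satisfies (i) |φ|²_{1/2,𝒢_h} ≤ C ‖curl_h φ‖²_{-1/2,Γ} and (ii) the bilinear form d(ψ,φ) = ⟨V curl_h ψ, curl_h φ⟩ + ⟨Tψ, ⟦φ⟧⟩ − ⟨⟦ψ⟧, Tφ⟩ + ⟨ν⟦ψ⟧, ⟦φ⟧⟩ with V coercive on H^{-1/2}(Γ) and ν ≥ ν₀ > 0. Then d(φ,φ) ≥ c ( |φ|²_{1/2,𝒢_h} + ‖⟦φ⟧‖²_{0,ℰ_h} ) for all φ ∈ Ψ_h, and consequently d(φ,φ) = 0 implies φ is constant on Γ, hence φ = 0 by the zero-mean condition. -/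

import Mathlib

/-- Ellipticity of the DG-BEM bilinear form `d` on the discontinuous boundary element
space `Ψ_h` (Section 3, used in Proposition 3.1).  `X` stands for the zero-mean space
`Ψ_h` (finite dimensional), `H` for `H^{-1/2}(Γ)³` with `V` the coercive single layer
operator, `curlh` the elementwise surface curl, `J` for `L²(ℰ_h)` with `jump` the
edge-jump operator, `T` the operator of (d), `N` multiplication by `ν ≥ ν₀ > 0`, and
`semi φ = |φ|_{1/2,𝒢_h}` satisfies the broken-seminorm bound (eqnorm)
`(semi φ)² ≤ Ceq ‖curl_h φ‖²`.  Functions with vanishing broken curl and vanishing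
jumps are constant, hence zero by the zero-mean condition (hypothesis `hker`).  Then
`d(φ,φ) ≥ c (|φ|²_{1/2,𝒢_h} + ‖⟦φ⟧‖²_{0,ℰ_h})` for some `c > 0`, and consequently
`d(φ,φ) = 0` implies `φ = 0`. -/
theorem stmt_14 {X H J : Type*}
    [AddCommGroup X] [Module ℝ X] [FiniteDimensional ℝ X]
    [NormedAddCommGroup H] [InnerProductSpace ℝ H] [CompleteSpace H]
    [NormedAddCommGroup J] [InnerProductSpace ℝ J] [CompleteSpace J]
    (V : H →L[ℝ] H →L[ℝ] ℝ) (C₀ : ℝ) (hC₀ : 0 < C₀)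
    (hcoer : ∀ η : H, C₀ * ‖η‖ ^ 2 ≤ V η η)
    (curlh : X →ₗ[ℝ] H) (jump : X →ₗ[ℝ] J) (T : X →ₗ[ℝ] J)
    (N : J →ₗ[ℝ] J) (ν₀ : ℝ) (hν₀ : 0 < ν₀)
    (hN : ∀ j : J, ν₀ * ‖j‖ ^ 2 ≤ inner ℝ (N j) j)
    (semi : X → ℝ) (hsemi : ∀ φ, 0 ≤ semi φ)
    (Ceq : ℝ) (hCeq : 0 < Ceq)
    -- broken-seminorm equivalence (eqnorm)
    (heq : ∀ φ : X, (semi φ) ^ 2 ≤ Ceq * ‖curlh φ‖ ^ 2)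
    -- zero-mean rigidity: curl-free, jump-free functions are constants of zero mean
    (hker : ∀ φ : X, curlh φ = 0 → jump φ = 0 → φ = 0)
    (d : X → X → ℝ)
    (hd : ∀ ψ φ : X, d ψ φ = V (curlh ψ) (curlh φ)
      + inner ℝ (T ψ) (jump φ) - inner ℝ (jump ψ) (T φ) + inner ℝ (N (jump ψ)) (jump φ)) :
    (∃ c > 0, ∀ φ : X, c * ((semi φ) ^ 2 + ‖jump φ‖ ^ 2) ≤ d φ φ)
      ∧ ∀ φ : X, d φ φ = 0 → φ = 0 := by

  have key : ∀ φ : X, C₀ * ‖curlh φ‖ ^ 2 + ν₀ * ‖jump φ‖ ^ 2 ≤ d φ φ := by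
    intro φ
    have h1 := hcoer (curlh φ)
    have h2 := hN (jump φ)
    have hsym : (inner ℝ (T φ) (jump φ) : ℝ) - inner ℝ (jump φ) (T φ) = 0 := by
      rw [real_inner_comm]; ring
    rw [hd]
    nlinarith [h1, h2]
  constructor
  · refine ⟨min (C₀ / Ceq) ν₀, lt_min (div_pos hC₀ hCeq) hν₀, fun φ => ?_⟩
    have h1 : min (C₀ / Ceq) ν₀ * (semi φ) ^ 2 ≤ C₀ * ‖curlh φ‖ ^ 2 := by
      have := heq φ
      have hm : min (C₀ / Ceq) ν₀ ≤ C₀ / Ceq := min_le_left _ _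
      have hs : (0:ℝ) ≤ (semi φ)^2 := sq_nonneg _
      calc min (C₀ / Ceq) ν₀ * (semi φ) ^ 2 ≤ (C₀ / Ceq) * (semi φ)^2 := by nlinarith
        _ ≤ (C₀ / Ceq) * (Ceq * ‖curlh φ‖ ^ 2) := by
            apply mul_le_mul_of_nonneg_left this (le_of_lt (div_pos hC₀ hCeq))
        _ = C₀ * ‖curlh φ‖ ^ 2 := by field_simp
    have h2 : min (C₀ / Ceq) ν₀ * ‖jump φ‖ ^ 2 ≤ ν₀ * ‖jump φ‖ ^ 2 := by
      nlinarith [min_le_right (C₀ / Ceq) ν₀, sq_nonneg ‖jump φ‖]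
    have := key φ
    nlinarith
  · intro φ h0
    have hk := key φ
    rw [h0] at hk
    have hc : curlh φ = 0 := by
      have : ‖curlh φ‖ ^ 2 = 0 := by nlinarith [sq_nonneg ‖curlh φ‖, sq_nonneg ‖jump φ‖]
      simpa [pow_eq_zero_iff] using this
    have hj : jump φ = 0 := by
      have : ‖jump φ‖ ^ 2 = 0 := by nlinarith [sq_nonneg ‖curlh φ‖, sq_nonneg ‖jump φ‖]
      simpa [pow_eq_zero_iff] using this
    exact hker φ hc hj
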